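/- Let (X,d) be a metric space, let φ be an entropy function with φ⁻¹({0}) = {1}, let λ : [0,∞) → [0,∞] satisfy λ⁻¹({0}) = {0}, and let p, q > 0. Assume that for every c ∈ [0,∞] and r, s ≥ 0 there exists θ* ≥ 0 attaining the infimum defining H_c(r,s), i.e. H_c(r,s) = θ*·L_c(r/θ*, s/θ*). Then the cone cost D_{Co[X]} is definite on the cone Co[X]: D_{Co[X]}([x,r],[y,s]) = 0 if and only if (r = s = 0) or (x = y and r = s). -/

import Mathlib

open MeasureTheory ENNReal NNReal

noncomputable section

/-- The recession constant `φ'_∞ = lim_{r → ∞} φ(r)/r` of an entropy function. -/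
def recessionConst (φ : ℝ≥0 → ℝ≥0∞) : ℝ≥0∞ :=
  Filter.limsup (fun r : ℝ≥0 => φ r / (r : ℝ≥0∞)) Filter.atTop

/-- An entropy function: convex, lower semicontinuous, `φ 1 = 0`. -/
def IsEntropy (φ : ℝ≥0 → ℝ≥0∞) : Prop :=
  ConvexOn ℝ≥0 Set.univ φ ∧ LowerSemicontinuous φ ∧ φ 1 = 0

/-- The reverse entropy `ψ(r) = r·φ(1/r)` for `r > 0`, with `ψ(0) = φ'_∞`. -/
def reverseEnt (φ : ℝ≥0 → ℝ≥0∞) (r : ℝ≥0) : ℝ≥0∞ :=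
  if r = 0 then recessionConst φ else (r : ℝ≥0∞) * φ r⁻¹

/-- The cost `L_c(r,s) = c + ψ(r) + ψ(s)`. -/
def Lcost (φ : ℝ≥0 → ℝ≥0∞) (c : ℝ≥0∞) (r s : ℝ≥0) : ℝ≥0∞ :=
  c + reverseEnt φ r + reverseEnt φ s

/-- The perspective term `θ·L_c(r/θ, s/θ)`, with the `θ = 0` term interpreted as
`ψ'_∞·(r+s) = φ(0)·(r+s)`. -/
def persp (φ : ℝ≥0 → ℝ≥0∞) (c : ℝ≥0∞) (r s θ : ℝ≥0) : ℝ≥0∞ :=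
  if θ = 0 then φ 0 * ((r : ℝ≥0∞) + (s : ℝ≥0∞))
  else (θ : ℝ≥0∞) * Lcost φ c (r / θ) (s / θ)

/-- `H_c(r,s) = inf_{θ ≥ 0} θ·L_c(r/θ, s/θ)`, the perspective transform of `L_c`. -/
def Hcost (φ : ℝ≥0 → ℝ≥0∞) (c : ℝ≥0∞) (r s : ℝ≥0) : ℝ≥0∞ :=
  ⨅ θ : ℝ≥0, persp φ c r s θ

/-- The recession constant of an entropy function vanishing only at 1 is positive. -/
lemma recessionConst_ne_zero (φ : ℝ≥0 → ℝ≥0∞) (hφ : IsEntropy φ)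
    (hφ0 : ∀ t, φ t = 0 ↔ t = 1) : recessionConst φ ≠ 0 := by
  have key : ∀ r : ℝ≥0, 2 ≤ r → φ 2 / 2 ≤ φ r / r := by
    intro r hr
    have hr1 : (1 : ℝ≥0) ≤ r - 1 :=
      le_tsub_of_add_le_left (by rwa [one_add_one_eq_two])
    set b : ℝ≥0 := (r - 1)⁻¹ with hb
    have hbne : (r - 1) ≠ 0 := by positivity
    have hb1 : b ≤ 1 := by
      rw [hb]; exact inv_le_one_of_one_le₀ hr1
    have hab : (1 - b) + b = 1 := tsub_add_cancel_of_le hb1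
    have hmid : (1 - b) • (1 : ℝ≥0) + b • r = 2 := by
      have hcr : (1 : ℝ) ≤ (r : ℝ) := by exact_mod_cast le_trans one_le_two hr
      simp only [smul_eq_mul, mul_one]
      rw [← NNReal.coe_inj]
      rw [NNReal.coe_add, NNReal.coe_sub hb1, NNReal.coe_mul, hb,
        NNReal.coe_inv, NNReal.coe_sub (le_trans one_le_two hr)]
      push_cast
      have : (r : ℝ) - 1 ≠ 0 := by
        have : (1:ℝ) ≤ (r:ℝ) - 1 := by
          have := NNReal.coe_le_coe.mpr hr; push_cast at this; linarith
        linarith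
      field_simp
      ring
    have hconv := hφ.1.2 (Set.mem_univ (1 : ℝ≥0)) (Set.mem_univ r)
      (zero_le : (0:ℝ≥0) ≤ 1 - b) (zero_le : (0:ℝ≥0) ≤ b) hab
    rw [hmid, hφ.2.2] at hconv
    simp only [smul_zero, zero_add, ENNReal.smul_def, smul_eq_mul] at hconv
    -- hconv : φ 2 ≤ (b : ℝ≥0∞) * φ r
    have hdiv : (b : ℝ≥0∞) / 2 ≤ (r : ℝ≥0∞)⁻¹ := by
      have hrne : r ≠ 0 := by
        intro h; rw [h] at hr; exact absurd hr (by norm_num)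
      have h2c : ((2:ℝ≥0):ℝ≥0∞) = 2 := rfl
      rw [← ENNReal.coe_inv hrne, ← h2c, ← ENNReal.coe_div two_ne_zero, ENNReal.coe_le_coe,
        ← NNReal.coe_le_coe]
      have hrR : (2 : ℝ) ≤ (r : ℝ) := by exact_mod_cast hr
      rw [NNReal.coe_div, NNReal.coe_inv, NNReal.coe_sub (le_trans one_le_two hr)]
      push_cast
      rw [inv_eq_one_div, div_div, inv_eq_one_div,
        div_le_div_iff₀ (by linarith) (by linarith)]
      linarith
    calc φ 2 / 2 ≤ ((b : ℝ≥0∞) * φ r) / 2 := by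
          exact ENNReal.div_le_div_right hconv 2
      _ = φ r * ((b : ℝ≥0∞) / 2) := by rw [mul_comm, mul_div_assoc]
      _ ≤ φ r * (r : ℝ≥0∞)⁻¹ := mul_le_mul_right hdiv _
      _ = φ r / r := rfl
  have hfreq : ∃ᶠ r in Filter.atTop, φ 2 / 2 ≤ φ r / (r : ℝ≥0∞) :=
    (Filter.eventually_atTop.mpr ⟨2, key⟩).frequently
  have hle : φ 2 / 2 ≤ recessionConst φ := Filter.le_limsup_of_frequently_le' hfreq
  intro h
  rw [h, le_zero_iff, ENNReal.div_eq_zero_iff] at hle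
  rcases hle with h2 | h2
  · exact (by norm_num : (2:ℝ≥0) ≠ 1) ((hφ0 2).mp h2)
  · exact (by norm_num : (2:ℝ≥0∞) ≠ ⊤) h2

lemma reverseEnt_eq_zero_iff (φ : ℝ≥0 → ℝ≥0∞) (hφ : IsEntropy φ)
    (hφ0 : ∀ t, φ t = 0 ↔ t = 1) (r : ℝ≥0) : reverseEnt φ r = 0 ↔ r = 1 := by
  rcases eq_or_ne r 0 with h0 | h0
  · subst h0
    simp [reverseEnt, recessionConst_ne_zero φ hφ hφ0]
  · simp only [reverseEnt, h0, if_false, mul_eq_zero, ENNReal.coe_eq_zero, h0, false_or]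
    rw [hφ0, inv_eq_one]

/-- The cone cost `D_{Co[X]}([x,r],[y,s]) = H_{λ(d(x,y))}(r^p, s^p)^{1/q}`
is definite on the cone over a metric space `X`: it vanishes iff `r = s = 0` or
(`x = y` and `r = s`). -/
theorem cone_cost_definite {X : Type*} [MetricSpace X]
    (φ : ℝ≥0 → ℝ≥0∞) (hφ : IsEntropy φ) (hφ0 : ∀ t, φ t = 0 ↔ t = 1)
    (lam : ℝ≥0 → ℝ≥0∞) (hlam : ∀ t, lam t = 0 ↔ t = 0)
    (p q : ℝ) (hp : 0 < p) (hq : 0 < q)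
    (hattain : ∀ (c : ℝ≥0∞) (r s : ℝ≥0), ∃ θ : ℝ≥0, Hcost φ c r s = persp φ c r s θ)
    (x y : X) (r s : ℝ≥0) :
    (Hcost φ (lam (nndist x y)) (r ^ p) (s ^ p)) ^ (1 / q) = 0 ↔
      (r = 0 ∧ s = 0) ∨ (x = y ∧ r = s) := by
  have hq' : (0 : ℝ) < 1 / q := by positivity
  rw [ENNReal.rpow_eq_zero_iff]
  simp only [hq', and_true, (asymm hq' : ¬ (1/q < 0)), and_false, or_false]
  set c := lam (nndist x y) with hc
  constructor
  · intro h
    obtain ⟨θ, hθ⟩ := hattain c (r ^ p) (s ^ p)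
    rw [hθ] at h
    rcases eq_or_ne θ 0 with h0 | h0
    · subst h0
      simp only [persp, if_true, mul_eq_zero] at h
      have hφ0' : φ 0 ≠ 0 := fun hz => (by norm_num : (0:ℝ≥0) ≠ 1) ((hφ0 0).mp hz)
      rcases h with h | h
      · exact absurd h hφ0'
      · rw [add_eq_zero] at h
        left
        constructor
        · have : r ^ p = 0 := by exact_mod_cast h.1
          rw [NNReal.rpow_eq_zero_iff] at this; exact this.1
        · have : s ^ p = 0 := by exact_mod_cast h.2
          rw [NNReal.rpow_eq_zero_iff] at this; exact this.1
    · simp only [persp, h0, if_false, mul_eq_zero, ENNReal.coe_eq_zero, h0, false_or,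
        Lcost, add_eq_zero] at h
      obtain ⟨⟨hc0, hr0⟩, hs0⟩ := h
      right
      have hx : x = y := by
        rw [hc, hlam] at hc0; exact eq_of_nndist_eq_zero hc0
      rw [reverseEnt_eq_zero_iff φ hφ hφ0] at hr0 hs0
      have hr' : r ^ p = θ := (div_eq_one_iff_eq h0).mp hr0
      have hs' : s ^ p = θ := (div_eq_one_iff_eq h0).mp hs0
      exact ⟨hx, NNReal.rpow_left_injective hp.ne'
        (show r ^ p = s ^ p by rw [hr', hs'])⟩
  · intro h
    have hψ1 : reverseEnt φ 1 = 0 := by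
      simp [reverseEnt, hφ.2.2]
    rcases h with ⟨hr, hs⟩ | ⟨hxy, hrs⟩
    · subst hr; subst hs
      refine le_antisymm (le_trans (iInf_le _ 0) ?_) zero_le
      simp [persp, NNReal.zero_rpow hp.ne']
    · rcases eq_or_ne r 0 with h0 | h0
      · subst h0
        refine le_antisymm (le_trans (iInf_le _ 0) ?_) zero_le
        simp [persp, NNReal.zero_rpow hp.ne', ← hrs]
      · subst hxy; subst hrs
        have hθ : r ^ p ≠ 0 := fun h => h0 (NNReal.rpow_eq_zero_iff.mp h).1
        refine le_antisymm (le_trans (iInf_le _ (r ^ p)) ?_) zero_le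
        have hc0 : c = 0 := by rw [hc, hlam]; simp
        simp [persp, hθ, Lcost, hc0, div_self hθ, hψ1]

end
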